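/- arXiv:math/9907002 — 3 statements merged into one kernel-verified Lean document; each statement's English description precedes it below -/
import Mathlib

section
/- Let Q ∈ ℝ[X,Y] be a polynomial that is irreducible when regarded as an element of ℂ[X,Y], and suppose its real zero set V_ℝ(Q) = {(x,y) ∈ ℝ² : Q(x,y) = 0} is infinite (equivalently, has dimension 1). Then V_ℝ(Q) is irreducible as a real algebraic variety: for all P₁, P₂ ∈ ℝ[X,Y] with V_ℝ(Q) = V_ℝ(P₁) ∪ V_ℝ(P₂), one has V_ℝ(Q) = V_ℝ(P₁) or V_ℝ(Q) = V_ℝ(P₂). -/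
open Polynomial
open scoped Polynomial.Bivariate

noncomputable section ZeroSetAux

/-- Elimination: if `q` is irreducible in `k[X][Y]` and does not divide `p`, there is a nonzero
polynomial `d` in the inner variable that vanishes at the inner coordinate of every common zero. -/
lemma aux_elim {k : Type*} [Field k] (q p : k[X][Y]) (hq : Irreducible q) (hnd : ¬ q ∣ p) :
    ∃ d : k[X], d ≠ 0 ∧ ∀ x y : k, q.evalEval x y = 0 → p.evalEval x y = 0 → d.eval x = 0 := by
  classical
  set F := FractionRing k[X]
  set φ : k[X] →+* F := algebraMap k[X] F with hφdef
  have hφ : Function.Injective φ := IsFractionRing.injective _ _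
  have hcop : IsCoprime (q.map φ) (p.map φ) := by
    by_cases hdeg : q.natDegree = 0
    · obtain ⟨a, rfl⟩ := Polynomial.natDegree_eq_zero.mp hdeg
      have ha : a ≠ 0 := fun h => hq.ne_zero (by simp [h])
      have hu : IsUnit ((C a).map φ) := by
        rw [Polynomial.map_C]
        exact Polynomial.isUnit_C.mpr ((map_ne_zero_iff φ hφ).mpr ha).isUnit
      obtain ⟨w, hw⟩ := isUnit_iff_exists_inv.mp hu
      exact ⟨w, 0, by rw [zero_mul, add_zero, mul_comm]; exact hw⟩
    · have hprim : q.IsPrimitive := by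
        intro r hr
        obtain ⟨s, rfl⟩ := hr
        rcases hq.isUnit_or_isUnit rfl with h | h
        · exact Polynomial.isUnit_C.mp h
        · exfalso
          apply hdeg
          have hq0 : C r * s ≠ 0 := hq.ne_zero
          have hC : C r ≠ 0 := left_ne_zero_of_mul hq0
          have hs0 : s ≠ 0 := right_ne_zero_of_mul hq0
          simp [Polynomial.natDegree_mul hC hs0, Polynomial.natDegree_eq_zero_of_isUnit h]
      have hirrF : Irreducible (q.map φ) :=
        (hprim.irreducible_iff_irreducible_map_fraction_map).mp hq
      refine (EuclideanDomain.dvd_or_coprime _ _ hirrF).resolve_left ?_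
      intro hdvd
      have hp0 : p ≠ 0 := fun h => hnd (h ▸ dvd_zero q)
      have hcont : (p.content : k[X]) ≠ 0 := fun h => hp0 (Polynomial.content_eq_zero_iff.mp h)
      have hdvd' : q.map φ ∣ (p.primPart).map φ := by
        have h1 : p.map φ = C (φ p.content) * (p.primPart).map φ := by
          conv_lhs => rw [p.eq_C_content_mul_primPart]
          rw [Polynomial.map_mul, Polynomial.map_C]
        have hu : IsUnit (C (φ p.content) : F[X]) :=
          Polynomial.isUnit_C.mpr ((map_ne_zero_iff φ hφ).mpr hcont).isUnit
        rw [h1] at hdvd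
        exact (IsUnit.dvd_mul_left hu).mp hdvd
      have := hprim.dvd_of_fraction_map_dvd_fraction_map hdvd'
      exact hnd (this.trans p.primPart_dvd)
  obtain ⟨a, b, hab⟩ := hcop
  obtain ⟨s, hs⟩ := IsLocalization.integerNormalization_map_to_map (nonZeroDivisors k[X]) a
  obtain ⟨t, ht⟩ := IsLocalization.integerNormalization_map_to_map (nonZeroDivisors k[X]) b
  set A := IsLocalization.integerNormalization (nonZeroDivisors k[X]) a
  set B := IsLocalization.integerNormalization (nonZeroDivisors k[X]) b
  have hs' : A.map φ = C (φ s) * a := by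
    rw [hs, ← IsScalarTower.algebraMap_smul F ((s : k[X])) a, Polynomial.smul_eq_C_mul]
  have ht' : B.map φ = C (φ t) * b := by
    rw [ht, ← IsScalarTower.algebraMap_smul F ((t : k[X])) b, Polynomial.smul_eq_C_mul]
  refine ⟨(s : k[X]) * (t : k[X]), mul_ne_zero (nonZeroDivisors.coe_ne_zero s)
    (nonZeroDivisors.coe_ne_zero t), ?_⟩
  have heq : A * q * C (t : k[X]) + B * p * C (s : k[X]) = C ((s : k[X]) * (t : k[X])) := by
    apply Polynomial.map_injective φ hφ
    rw [Polynomial.map_add, Polynomial.map_mul, Polynomial.map_mul, Polynomial.map_mul,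
      Polynomial.map_mul, Polynomial.map_C, Polynomial.map_C, Polynomial.map_C, hs', ht',
      map_mul, Polynomial.C_mul]
    linear_combination (C (φ s) * C (φ t)) * hab
  intro x y hqx hpx
  have h2 := congrArg (Polynomial.evalEvalRingHom x y) heq
  simp only [map_add, map_mul, Polynomial.coe_evalEvalRingHom, hqx, hpx, mul_zero, zero_mul,
    mul_comm, add_zero, zero_add, Polynomial.evalEval_C] at h2
  simpa using h2.symm

/-- The algebra isomorphism `ℂ[x₀,x₁] ≃ ℂ[X][Y]` with `x₀ ↦ Y` (outer) and `x₁ ↦ X` (inner). -/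
def e1 : MvPolynomial (Fin 1) ℂ ≃ₐ[ℂ] ℂ[X] :=
  (MvPolynomial.finSuccEquiv ℂ 0).trans (Polynomial.mapAlgEquiv (MvPolynomial.isEmptyAlgEquiv ℂ (Fin 0)))

def e2 : MvPolynomial (Fin 2) ℂ ≃ₐ[ℂ] ℂ[X][Y] :=
  (MvPolynomial.finSuccEquiv ℂ 1).trans (Polynomial.mapAlgEquiv e1)

lemma e2_C (c : ℂ) : e2 (MvPolynomial.C c) = C (C c) := by
  rw [show (MvPolynomial.C c : MvPolynomial (Fin 2) ℂ) = algebraMap ℂ _ c from rfl,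
    AlgEquiv.commutes]
  simp [Polynomial.algebraMap_apply]

lemma e2_X0 : e2 (MvPolynomial.X 0) = (Polynomial.X : ℂ[X][Y]) := by
  simp only [e2, AlgEquiv.trans_apply, MvPolynomial.finSuccEquiv_X_zero]
  simp [Polynomial.mapAlgEquiv]

lemma e2_X1 : e2 (MvPolynomial.X 1) = (C Polynomial.X : ℂ[X][Y]) := by
  have h : (1 : Fin 2) = Fin.succ 0 := rfl
  simp only [e2, AlgEquiv.trans_apply, h, MvPolynomial.finSuccEquiv_X_succ]
  simp [Polynomial.mapAlgEquiv, e1, MvPolynomial.finSuccEquiv_X_zero]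

lemma evalEval_e2 (f : MvPolynomial (Fin 2) ℂ) (x y : ℂ) :
    (e2 f).evalEval x y = MvPolynomial.eval ![y, x] f := by
  have key : (Polynomial.evalEvalRingHom x y).comp (e2 : MvPolynomial (Fin 2) ℂ →+* ℂ[X][Y]) =
      (MvPolynomial.eval ![y, x] : MvPolynomial (Fin 2) ℂ →+* ℂ) := by
    apply MvPolynomial.ringHom_ext
    · intro c
      have : ((e2 : MvPolynomial (Fin 2) ℂ →+* ℂ[X][Y])) (MvPolynomial.C c) = C (C c) := e2_C c
      simp [RingHom.comp_apply, this]
    · intro i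
      fin_cases i
      · have h0 : ((e2 : MvPolynomial (Fin 2) ℂ →+* ℂ[X][Y])) (MvPolynomial.X 0) =
            Polynomial.X := e2_X0
        simp [RingHom.comp_apply, h0]
      · have h1 : ((e2 : MvPolynomial (Fin 2) ℂ →+* ℂ[X][Y])) (MvPolynomial.X 1) =
            C Polynomial.X := e2_X1
        simp [RingHom.comp_apply, h1, Polynomial.evalEval_C]
  exact RingHom.congr_fun key f

lemma dvd_e2 {q p : MvPolynomial (Fin 2) ℂ} (h : ¬ q ∣ p) : ¬ e2 q ∣ e2 p := by
  rintro ⟨r, hr⟩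
  exact h ⟨e2.symm r, e2.injective (by rw [map_mul, hr]; simp)⟩

/-- Two complex bivariate polynomials with `q` irreducible not dividing `p` have finitely many
common zeros. -/
lemma finite_common_zeros (q p : MvPolynomial (Fin 2) ℂ) (hq : Irreducible q) (hnd : ¬ q ∣ p) :
    {z : ℂ × ℂ | MvPolynomial.eval ![z.1, z.2] q = 0 ∧
      MvPolynomial.eval ![z.1, z.2] p = 0}.Finite := by
  classical
  -- bound the second coordinate
  obtain ⟨d₁, hd₁0, hd₁⟩ := aux_elim (e2 q) (e2 p)
    ((MulEquiv.irreducible_iff (e2 : MvPolynomial (Fin 2) ℂ ≃* ℂ[X][Y])).mpr hq) (dvd_e2 hnd)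
  -- bound the first coordinate, using the swap of variables
  set sw : MvPolynomial (Fin 2) ℂ ≃ₐ[ℂ] MvPolynomial (Fin 2) ℂ :=
    MvPolynomial.renameEquiv ℂ (Equiv.swap (0 : Fin 2) 1)
  have hswq : Irreducible (sw q) :=
    (MulEquiv.irreducible_iff (sw : MvPolynomial (Fin 2) ℂ ≃* MvPolynomial (Fin 2) ℂ)).mpr hq
  have hswnd : ¬ sw q ∣ sw p := by
    rintro ⟨r, hr⟩
    exact hnd ⟨sw.symm r, sw.injective (by rw [map_mul, hr]; simp)⟩
  obtain ⟨d₂, hd₂0, hd₂⟩ := aux_elim (e2 (sw q)) (e2 (sw p))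
    ((MulEquiv.irreducible_iff (e2 : MvPolynomial (Fin 2) ℂ ≃* ℂ[X][Y])).mpr hswq) (dvd_e2 hswnd)
  have hswap_eval : ∀ (f : MvPolynomial (Fin 2) ℂ) (x y : ℂ),
      MvPolynomial.eval ![y, x] (sw f) = MvPolynomial.eval ![x, y] f := by
    intro f x y
    rw [show (sw f) = MvPolynomial.rename (Equiv.swap (0 : Fin 2) 1) f from rfl,
      MvPolynomial.eval_rename]
    have hc : (![y, x] ∘ (Equiv.swap (0 : Fin 2) 1)) = ![x, y] := by
      funext i; fin_cases i <;> simp [Equiv.swap_apply_left, Equiv.swap_apply_right]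
    rw [hc]
  apply Set.Finite.subset (Set.Finite.prod (finite_setOf_isRoot hd₂0) (finite_setOf_isRoot hd₁0))
  rintro ⟨x, y⟩ ⟨hqz, hpz⟩
  constructor
  · -- d₂.eval x = 0
    refine hd₂ x y ?_ ?_
    · rw [evalEval_e2, hswap_eval]; exact hqz
    · rw [evalEval_e2, hswap_eval]; exact hpz
  · -- d₁.eval y = 0
    refine hd₁ y x ?_ ?_
    · rw [evalEval_e2]; exact hqz
    · rw [evalEval_e2]; exact hpz

lemma eval_map_complex (P : MvPolynomial (Fin 2) ℝ) (x y : ℝ) :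
    MvPolynomial.eval ![(x : ℂ), (y : ℂ)] (MvPolynomial.map (algebraMap ℝ ℂ) P) =
      ((MvPolynomial.eval ![x, y] P : ℝ) : ℂ) := by
  rw [MvPolynomial.eval_map]
  have hg : ![(x : ℂ), (y : ℂ)] = (algebraMap ℝ ℂ : ℝ →+* ℂ) ∘ ![x, y] := by
    funext i; fin_cases i <;> simp
  rw [hg, show ((MvPolynomial.eval ![x, y] P : ℝ) : ℂ) =
      (algebraMap ℝ ℂ) (MvPolynomial.eval₂ (RingHom.id ℝ) ![x, y] P) by
        rw [← MvPolynomial.eval_map]; simp,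
    MvPolynomial.eval₂_comp_left]
  simp

end ZeroSetAux

/-- The real zero set of a two-variable real polynomial, as a subset of `ℝ × ℝ`. -/
def realZeroSet (P : MvPolynomial (Fin 2) ℝ) : Set (ℝ × ℝ) :=
  {p | MvPolynomial.eval ![p.1, p.2] P = 0}

theorem real_zero_set_irreducible_of_complex_irreducible
    (Q : MvPolynomial (Fin 2) ℝ)
    (hirr : Irreducible (MvPolynomial.map (algebraMap ℝ ℂ) Q))
    (hinf : (realZeroSet Q).Infinite) :
    ∀ P₁ P₂ : MvPolynomial (Fin 2) ℝ,
      realZeroSet Q = realZeroSet P₁ ∪ realZeroSet P₂ →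
      realZeroSet Q = realZeroSet P₁ ∨ realZeroSet Q = realZeroSet P₂ := by
  intro P₁ P₂ hunion
  set Qc := MvPolynomial.map (algebraMap ℝ ℂ) Q
  -- Qc divides the complexification of P₁ * P₂
  have hdvd : Qc ∣ MvPolynomial.map (algebraMap ℝ ℂ) (P₁ * P₂) := by
    by_contra hnd
    have hfin := finite_common_zeros Qc (MvPolynomial.map (algebraMap ℝ ℂ) (P₁ * P₂)) hirr hnd
    apply hinf
    have hmap : Set.MapsTo (fun z : ℝ × ℝ => ((z.1 : ℂ), (z.2 : ℂ))) (realZeroSet Q)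
        {z : ℂ × ℂ | MvPolynomial.eval ![z.1, z.2] Qc = 0 ∧
          MvPolynomial.eval ![z.1, z.2] (MvPolynomial.map (algebraMap ℝ ℂ) (P₁ * P₂)) = 0} := by
      rintro ⟨x, y⟩ hz
      have hQ : MvPolynomial.eval ![x, y] Q = 0 := hz
      have hP : MvPolynomial.eval ![x, y] (P₁ * P₂) = 0 := by
        have := hunion ▸ hz
        rcases this with h | h
        · rw [map_mul, h, zero_mul]
        · rw [map_mul, h, mul_zero]
      constructor
      · show MvPolynomial.eval ![((x:ℝ):ℂ), ((y:ℝ):ℂ)] Qc = 0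
        rw [eval_map_complex, hQ]; simp
      · show MvPolynomial.eval ![((x:ℝ):ℂ), ((y:ℝ):ℂ)] _ = 0
        rw [eval_map_complex, hP]; simp
    have hinj : Set.InjOn (fun z : ℝ × ℝ => ((z.1 : ℂ), (z.2 : ℂ))) (realZeroSet Q) := by
      rintro ⟨a, b⟩ _ ⟨c, d⟩ _ h
      simp only [Prod.mk.injEq, Complex.ofReal_inj] at h
      exact Prod.ext h.1 h.2
    exact Set.Finite.of_finite_image (hfin.subset (Set.mapsTo_iff_image_subset.mp hmap)) hinj
  -- Qc is prime
  have hprime : Prime Qc := (UniqueFactorizationMonoid.irreducible_iff_prime).mp hirr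
  rw [map_mul] at hdvd
  have key : ∀ P : MvPolynomial (Fin 2) ℝ,
      Qc ∣ MvPolynomial.map (algebraMap ℝ ℂ) P → realZeroSet Q ⊆ realZeroSet P := by
    intro P hP
    rintro ⟨x, y⟩ hz
    obtain ⟨S, hS⟩ := hP
    have hQ : MvPolynomial.eval ![x, y] Q = 0 := hz
    have : ((MvPolynomial.eval ![x, y] P : ℝ) : ℂ) = 0 := by
      rw [← eval_map_complex, hS, map_mul, eval_map_complex, hQ]
      simp
    exact_mod_cast this
  rcases hprime.2.2 _ _ hdvd with h | h
  · left
    refine Set.Subset.antisymm (key P₁ h) ?_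
    rw [hunion]
    exact Set.subset_union_left
  · right
    refine Set.Subset.antisymm (key P₂ h) ?_
    rw [hunion]
    exact Set.subset_union_right
end

section
/- For every integer n ≥ 0, the real algebraic variety V_ℝ(Qₙ) = {(x,y) ∈ ℝ² : xⁿ − 1 − y² = 0} defined by the polynomial Qₙ(X,Y) = Xⁿ − 1 − Y² is irreducible: for all P₁, P₂ ∈ ℝ[X,Y] with V_ℝ(Qₙ) = V_ℝ(P₁) ∪ V_ℝ(P₂), one has V_ℝ(Qₙ) = V_ℝ(P₁) or V_ℝ(Qₙ) = V_ℝ(P₂). -/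
open Polynomial in
/-- View a 2-variable polynomial as a polynomial in `Y` with coefficients in `ℝ[X]`. -/
noncomputable def toPoly2 (P : MvPolynomial (Fin 2) ℝ) : Polynomial (Polynomial ℝ) :=
  MvPolynomial.aeval ![Polynomial.C Polynomial.X, Polynomial.X] P

open Polynomial in
lemma eval_toPoly2 (P : MvPolynomial (Fin 2) ℝ) (x y : ℝ) :
    Polynomial.eval₂ (Polynomial.evalRingHom x) y (toPoly2 P) = MvPolynomial.eval ![x, y] P := by
  induction P using MvPolynomial.induction_on with
  | C a => simp [toPoly2]
  | add p q hp hq => simp only [toPoly2, map_add, eval₂_add] at *; rw [hp, hq]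
  | mul_X p i hp =>
    fin_cases i <;>
      · simp only [toPoly2, map_mul, eval₂_mul] at *
        rw [hp]
        norm_num [eval₂_C, eval₂_X]

open Polynomial in
lemma vanish_on_V (n : ℕ) (P : MvPolynomial (Fin 2) ℝ)
    (S : Set (ℝ × ℝ)) (hS : S.Infinite)
    (hSV : ∀ p ∈ S, p.1 ^ n - 1 - p.2 ^ 2 = 0)
    (hSP : ∀ p ∈ S, MvPolynomial.eval ![p.1, p.2] P = 0) :
    ∀ p : ℝ × ℝ, p.1 ^ n - 1 - p.2 ^ 2 = 0 → MvPolynomial.eval ![p.1, p.2] P = 0 := by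
  classical
  set q : Polynomial (Polynomial ℝ) := X ^ 2 - C (X ^ n - 1) with hq_def
  have hq_monic : q.Monic := by
    apply monic_X_pow_sub
    calc degree (C (X ^ n - 1 : Polynomial ℝ)) ≤ 0 := degree_C_le
      _ < 2 := by norm_num
  set r : Polynomial (Polynomial ℝ) := toPoly2 P %ₘ q with hr_def
  set b0 : Polynomial ℝ := r.coeff 0 with hb0_def
  set b1 : Polynomial ℝ := r.coeff 1 with hb1_def
  have hqdeg : q.degree = 2 := degree_X_pow_sub_C (by norm_num) _
  have hrdeg : r.degree ≤ 1 := by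
    have := degree_modByMonic_lt (toPoly2 P) hq_monic
    rw [hqdeg] at this
    exact Order.le_of_lt_succ (by exact_mod_cast this)
  have hr_eq : r = C b1 * X + C b0 := eq_X_add_C_of_degree_le_one hrdeg
  -- evaluation of P on V via the remainder
  have key : ∀ x y : ℝ, x ^ n - 1 - y ^ 2 = 0 →
      MvPolynomial.eval ![x, y] P = b0.eval x + b1.eval x * y := by
    intro x y hxy
    have hdecomp : toPoly2 P %ₘ q + q * (toPoly2 P /ₘ q) = toPoly2 P :=
      modByMonic_add_div _ q
    have := congrArg (Polynomial.eval₂ (Polynomial.evalRingHom x) y) hdecomp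
    rw [eval_toPoly2] at this
    rw [← this]
    have hq0 : Polynomial.eval₂ (Polynomial.evalRingHom x) y q = 0 := by
      rw [hq_def]
      rw [eval₂_sub, eval₂_pow, eval₂_X, eval₂_C]
      simp only [coe_evalRingHom, eval_sub, eval_pow, eval_X, eval_one]
      linarith
    rw [eval₂_add, eval₂_mul, hq0, zero_mul, add_zero, ← hr_def, hr_eq]
    simp [eval₂_add, eval₂_mul, eval₂_C, eval₂_X]
    ring
  -- the one-variable polynomial that vanishes at infinitely many x
  have hinf_x : (Set.range (fun p : S => (p : ℝ × ℝ).1)).Infinite ∨ True := Or.inr trivial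
  have hx_inf : (Prod.fst '' S).Infinite := by
    intro hfin
    apply hS
    have : S ⊆ ⋃ x ∈ Prod.fst '' S, {(x, Real.sqrt (x ^ n - 1)), (x, -Real.sqrt (x ^ n - 1))} := by
      intro p hp
      have h1 : p.1 ^ n - 1 - p.2 ^ 2 = 0 := hSV p hp
      have h2 : p.2 ^ 2 = p.1 ^ n - 1 := by linarith
      have h3 : Real.sqrt (p.1 ^ n - 1) = |p.2| := by
        rw [← h2, Real.sqrt_sq_eq_abs]
      simp only [Set.mem_iUnion]
      refine ⟨p.1, ⟨p, hp, rfl⟩, ?_⟩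
      rcases abs_cases p.2 with ⟨ha, _⟩ | ⟨ha, _⟩
      · left; rw [h3, ha]
      · right; rw [h3, ha]; simp
    exact Set.Finite.subset (Set.Finite.biUnion hfin (fun x _ => by
      exact (Set.finite_singleton _).insert _)) this
  set h : Polynomial ℝ := b0 ^ 2 - b1 ^ 2 * (X ^ n - 1) with hh_def
  have hh0 : h = 0 := by
    apply eq_zero_of_infinite_isRoot
    apply Set.Infinite.mono _ hx_inf
    rintro x ⟨p, hp, rfl⟩
    have h1 := hSV p hp
    have h2 := hSP p hp
    rw [key p.1 p.2 h1] at h2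
    have h3 : p.2 ^ 2 = p.1 ^ n - 1 := by linarith
    have : b0.eval p.1 = -(b1.eval p.1 * p.2) := by linarith
    simp only [Set.mem_setOf_eq, IsRoot.def, hh_def, eval_sub, eval_mul, eval_pow, eval_X,
      eval_one]
    rw [this]
    rw [← h3]
    ring
  have hb : b0 ^ 2 = b1 ^ 2 * (X ^ n - 1) := by
    have := hh0
    rw [hh_def, sub_eq_zero] at this
    exact this
  rcases Nat.eq_zero_or_pos n with hn | hn
  · -- n = 0 : b0 = 0 and y = 0 on V
    subst hn
    have hb0 : b0 = 0 := by
      have : b0 ^ 2 = 0 := by simpa using hb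
      exact pow_eq_zero_iff (by norm_num) |>.mp this
    rintro ⟨x, y⟩ hxy
    simp only [Set.mem_setOf_eq, pow_zero] at hxy
    have hy : y = 0 := by nlinarith
    rw [key x y (by simpa using hxy), hb0, hy]
    simp
  · -- n ≥ 1 : b0 = b1 = 0 by a multiplicity argument at the root 1
    have hXn : (X ^ n - 1 : Polynomial ℝ) ≠ 0 := by
      intro hcon
      have := congrArg (Polynomial.eval 0) hcon
      simp [zero_pow hn.ne'] at this
    have hrm1 : rootMultiplicity 1 (X ^ n - 1 : Polynomial ℝ) = 1 := by
      have hgs : (∑ i ∈ Finset.range n, (X : Polynomial ℝ) ^ i) * (X - 1) = X ^ n - 1 :=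
        geom_sum_mul X n
      have hgne : (∑ i ∈ Finset.range n, (X : Polynomial ℝ) ^ i) * (X - 1) ≠ 0 := by
        rw [hgs]; exact hXn
      rw [← hgs, rootMultiplicity_mul hgne]
      have h1 : rootMultiplicity 1 (∑ i ∈ Finset.range n, (X : Polynomial ℝ) ^ i) = 0 := by
        apply rootMultiplicity_eq_zero
        simp only [IsRoot.def, eval_finset_sum, eval_pow, eval_X, one_pow]
        simp only [Finset.sum_const, Finset.card_range, nsmul_eq_mul, mul_one]
        exact_mod_cast Nat.cast_ne_zero.mpr hn.ne'
      have h2 : rootMultiplicity 1 (X - 1 : Polynomial ℝ) = 1 := by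
        have := rootMultiplicity_X_sub_C_self (R := ℝ) (x := 1)
        simpa using this
      rw [h1, h2]
    have hb1 : b1 = 0 := by
      by_contra hb1
      have hb1sq : (b1 ^ 2 * (X ^ n - 1) : Polynomial ℝ) ≠ 0 :=
        mul_ne_zero (pow_ne_zero _ hb1) hXn
      have hb0 : b0 ≠ 0 := by
        intro hcon
        apply hb1sq
        rw [← hb, hcon]
        ring
      have e1 : rootMultiplicity 1 (b0 ^ 2) = 2 * rootMultiplicity 1 b0 := by
        rw [pow_two, rootMultiplicity_mul (mul_ne_zero hb0 hb0)]; ring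
      have e2 : rootMultiplicity 1 (b1 ^ 2 * (X ^ n - 1) : Polynomial ℝ)
          = 2 * rootMultiplicity 1 b1 + 1 := by
        rw [rootMultiplicity_mul hb1sq, pow_two,
          rootMultiplicity_mul (mul_ne_zero hb1 hb1), hrm1]
        ring
      have := congrArg (rootMultiplicity 1) hb
      rw [e1, e2] at this
      omega
    have hb0 : b0 = 0 := by
      have : b0 ^ 2 = 0 := by rw [hb, hb1]; ring
      exact pow_eq_zero_iff (by norm_num) |>.mp this
    rintro ⟨x, y⟩ hxy
    simp only [Set.mem_setOf_eq] at hxy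
    rw [key x y hxy, hb0, hb1]
    simp

lemma V_infinite (n : ℕ) : {p : ℝ × ℝ | p.1 ^ n - 1 - p.2 ^ 2 = 0}.Infinite := by
  have hsub : (fun t : ℝ => (t, Real.sqrt (t ^ n - 1))) '' Set.Ici 1 ⊆
      {p : ℝ × ℝ | p.1 ^ n - 1 - p.2 ^ 2 = 0} := by
    rintro _ ⟨t, ht, rfl⟩
    have h1 : (1 : ℝ) ≤ t ^ n := one_le_pow₀ ht
    simp only [Set.mem_setOf_eq]
    rw [Real.sq_sqrt (by linarith)]
    ring
  apply Set.Infinite.mono hsub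
  apply Set.Infinite.image
  · intro a _ b _ hab
    exact congrArg Prod.fst hab
  · exact Set.Ici_infinite 1

theorem zero_set_Qn_irreducible (n : ℕ) :
    ∀ P₁ P₂ : MvPolynomial (Fin 2) ℝ,
      {p : ℝ × ℝ | p.1 ^ n - 1 - p.2 ^ 2 = 0} = realZeroSet P₁ ∪ realZeroSet P₂ →
      {p : ℝ × ℝ | p.1 ^ n - 1 - p.2 ^ 2 = 0} = realZeroSet P₁ ∨
        {p : ℝ × ℝ | p.1 ^ n - 1 - p.2 ^ 2 = 0} = realZeroSet P₂ := by
  intro P₁ P₂ hV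
  set V := {p : ℝ × ℝ | p.1 ^ n - 1 - p.2 ^ 2 = 0} with hV_def
  have hVinf : V.Infinite := V_infinite n
  have hsplit : V = (realZeroSet P₁ ∩ V) ∪ (realZeroSet P₂ ∩ V) := by
    rw [← Set.union_inter_distrib_right, ← hV, Set.inter_self]
  have hone : (realZeroSet P₁ ∩ V).Infinite ∨ (realZeroSet P₂ ∩ V).Infinite := by
    rw [hsplit] at hVinf
    exact Set.infinite_union.mp hVinf
  have main : ∀ P : MvPolynomial (Fin 2) ℝ, realZeroSet P ⊆ V →
      (realZeroSet P ∩ V).Infinite → V = realZeroSet P := by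
    intro P hPsub hinf
    apply Set.Subset.antisymm
    · intro p hp
      exact vanish_on_V n P (realZeroSet P ∩ V) hinf
        (fun q hq => hq.2) (fun q hq => hq.1) p hp
    · exact hPsub
  rcases hone with h1 | h2
  · exact Or.inl (main P₁ (fun p hp => by rw [hV]; exact Or.inl hp) h1)
  · exact Or.inr (main P₂ (fun p hp => by rw [hV]; exact Or.inr hp) h2)
end

section
/- For every integer n ≥ 1, the real algebraic variety Vₙ = {(x,y) ∈ ℝ² : x^{2n} − (1+y²)² = 0} is irreducible if and only if n is even. Here irreducibility means: for all P₁, P₂ ∈ ℝ[X,Y] with Vₙ = V_ℝ(P₁) ∪ V_ℝ(P₂), one has Vₙ = V_ℝ(P₁) or Vₙ = V_ℝ(P₂). -/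
open Polynomial

lemma decomp (n : ℕ) (P : MvPolynomial (Fin 2) ℝ) :
    ∃ a b : Polynomial ℝ, ∀ x y : ℝ, y ^ 2 = x ^ n - 1 →
      MvPolynomial.eval ![x, y] P = a.eval x + y * b.eval x := by
  set d : Polynomial (Polynomial ℝ) := X ^ 2 - C ((X : Polynomial ℝ) ^ n - 1) with hd
  have hmonic : d.Monic := monic_X_pow_sub_C _ two_ne_zero
  set Q : Polynomial (Polynomial ℝ) :=
    MvPolynomial.eval₂ (Polynomial.C.comp Polynomial.C)
      ![Polynomial.C Polynomial.X, Polynomial.X] P with hQ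
  set R := Q %ₘ d with hR
  refine ⟨R.coeff 0, R.coeff 1, ?_⟩
  intro x y hxy
  have hdeg : R.degree < 2 := by
    have := degree_modByMonic_lt Q hmonic
    rwa [hd, degree_X_pow_sub_C (by norm_num)] at this
  have hdeg1 : R.degree ≤ 1 := by
    rcases hR' : R.degree with _ | k
    · exact bot_le
    · rw [hR'] at hdeg
      rw [WithBot.some_eq_coe] at hdeg ⊢
      have h2 : ((2:ℕ) : WithBot ℕ) = 2 := rfl
      have h1 : ((1:ℕ) : WithBot ℕ) = 1 := rfl
      rw [← h2] at hdeg
      rw [← h1]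
      exact WithBot.coe_le_coe.mpr (Nat.lt_succ_iff.mp (WithBot.coe_lt_coe.mp hdeg))
  have hRform : R = C (R.coeff 1) * X + C (R.coeff 0) :=
    eq_X_add_C_of_degree_le_one hdeg1
  set φ : Polynomial (Polynomial ℝ) →+* ℝ :=
    (Polynomial.evalRingHom y).comp (Polynomial.mapRingHom (Polynomial.evalRingHom x)) with hφ
  have hQeval : φ Q = MvPolynomial.eval ![x, y] P := by
    rw [hQ, MvPolynomial.eval₂_comp_left φ]
    have h1 : φ.comp (Polynomial.C.comp Polynomial.C) = RingHom.id ℝ := by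
      ext r; simp [hφ]
    rw [h1]
    have h2 : (φ ∘ ![Polynomial.C Polynomial.X, Polynomial.X]) = ![x, y] := by
      funext i; fin_cases i <;> simp [hφ]
    rw [h2]
    rfl
  have hQsplit : Q = R + d * (Q /ₘ d) := (modByMonic_add_div Q d).symm
  have hφd : φ d = 0 := by
    simp [hd, hφ, hxy]
  rw [← hQeval, hQsplit, map_add, map_mul, hφd, zero_mul, add_zero, hRform]
  simp [hφ]
  ring

lemma vanish_of_N_zero (n : ℕ) (hn : 1 ≤ n) (a b : Polynomial ℝ)
    (h : a ^ 2 - ((X : Polynomial ℝ) ^ n - 1) * b ^ 2 = 0) : a = 0 ∧ b = 0 := by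
  have key : ∀ x : ℝ, 0 < x → x < 1 → a.eval x = 0 ∧ b.eval x = 0 := by
    intro x hx0 hx1
    have hxn : x ^ n < 1 := pow_lt_one₀ hx0.le hx1 (by omega)
    have he : a.eval x ^ 2 - (x ^ n - 1) * b.eval x ^ 2 = 0 := by
      have := congrArg (Polynomial.eval x) h
      simpa using this
    have ha0 : a.eval x = 0 := by
      nlinarith [sq_nonneg (a.eval x), sq_nonneg (b.eval x)]
    refine ⟨ha0, ?_⟩
    have hb2 : (x ^ n - 1) * b.eval x ^ 2 = 0 := by nlinarith
    rcases mul_eq_zero.mp hb2 with h' | h'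
    · linarith
    · exact pow_eq_zero_iff (by norm_num) |>.mp h'
  have hinf : (Set.Ioo (0:ℝ) 1).Infinite := Set.Ioo_infinite (by norm_num)
  constructor
  · apply Polynomial.eq_zero_of_infinite_isRoot
    apply hinf.mono
    rintro x ⟨hx0, hx1⟩
    exact (key x hx0 hx1).1
  · apply Polynomial.eq_zero_of_infinite_isRoot
    apply hinf.mono
    rintro x ⟨hx0, hx1⟩
    exact (key x hx0 hx1).2

theorem Vn_irreducible_iff_even (n : ℕ) (hn : 1 ≤ n) :
    (∀ P₁ P₂ : MvPolynomial (Fin 2) ℝ,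
        {p : ℝ × ℝ | p.1 ^ (2 * n) - (1 + p.2 ^ 2) ^ 2 = 0} =
            realZeroSet P₁ ∪ realZeroSet P₂ →
        {p : ℝ × ℝ | p.1 ^ (2 * n) - (1 + p.2 ^ 2) ^ 2 = 0} = realZeroSet P₁ ∨
          {p : ℝ × ℝ | p.1 ^ (2 * n) - (1 + p.2 ^ 2) ^ 2 = 0} = realZeroSet P₂) ↔
      Even n := by
  have hpow : ∀ x : ℝ, x ^ (2 * n) = (x ^ n) ^ 2 := by
    intro x; rw [mul_comm, pow_mul]
  constructor
  · -- irreducible → even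
    intro h
    by_contra hodd
    have hoddn : Odd n := Nat.not_even_iff_odd.mp hodd
    set P₁ : MvPolynomial (Fin 2) ℝ :=
      MvPolynomial.X 0 ^ n - (1 + MvPolynomial.X 1 ^ 2) with hP₁
    set P₂ : MvPolynomial (Fin 2) ℝ :=
      MvPolynomial.X 0 ^ n + (1 + MvPolynomial.X 1 ^ 2) with hP₂
    have e₁ : ∀ x y : ℝ, MvPolynomial.eval ![x, y] P₁ = x ^ n - (1 + y ^ 2) := by
      intro x y; simp [hP₁]
    have e₂ : ∀ x y : ℝ, MvPolynomial.eval ![x, y] P₂ = x ^ n + (1 + y ^ 2) := by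
      intro x y; simp [hP₂]
    have hU : {p : ℝ × ℝ | p.1 ^ (2 * n) - (1 + p.2 ^ 2) ^ 2 = 0} =
        realZeroSet P₁ ∪ realZeroSet P₂ := by
      ext ⟨x, y⟩
      simp only [Set.mem_setOf_eq, Set.mem_union, realZeroSet, e₁, e₂]
      rw [hpow x]
      constructor
      · intro h0
        have : (x ^ n - (1 + y ^ 2)) * (x ^ n + (1 + y ^ 2)) = 0 := by
          rw [← h0]; ring
        exact mul_eq_zero.mp this
      · rintro (h0 | h0) <;> nlinarith
    rcases h P₁ P₂ hU with hS | hS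
    · have h1 : ((-1 : ℝ), (0 : ℝ)) ∈
          {p : ℝ × ℝ | p.1 ^ (2 * n) - (1 + p.2 ^ 2) ^ 2 = 0} := by
        simp [hpow, hoddn.neg_one_pow]
      rw [hS] at h1
      have := h1
      simp only [realZeroSet, Set.mem_setOf_eq] at this
      rw [e₁ (-1) 0, hoddn.neg_one_pow] at this
      norm_num at this
    · have h1 : ((1 : ℝ), (0 : ℝ)) ∈
          {p : ℝ × ℝ | p.1 ^ (2 * n) - (1 + p.2 ^ 2) ^ 2 = 0} := by
        simp [hpow]
      rw [hS] at h1
      have := h1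
      simp only [realZeroSet, Set.mem_setOf_eq] at this
      rw [e₂ 1 0] at this
      norm_num at this
  · -- even → irreducible
    intro hev P₁ P₂ hU
    obtain ⟨a₁, b₁, h₁⟩ := decomp n P₁
    obtain ⟨a₂, b₂, h₂⟩ := decomp n P₂
    have memS : ∀ x y : ℝ,
        ((x, y) ∈ {p : ℝ × ℝ | p.1 ^ (2 * n) - (1 + p.2 ^ 2) ^ 2 = 0}) ↔
          x ^ n = 1 + y ^ 2 := by
      intro x y
      simp only [Set.mem_setOf_eq]
      rw [hpow x]
      constructor
      · intro h0
        have hx : 0 ≤ x ^ n := hev.pow_nonneg x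
        nlinarith [sq_nonneg y]
      · intro h0; rw [h0]; ring
    have hprod : (a₁ ^ 2 - ((X : Polynomial ℝ) ^ n - 1) * b₁ ^ 2) *
        (a₂ ^ 2 - ((X : Polynomial ℝ) ^ n - 1) * b₂ ^ 2) = 0 := by
      apply Polynomial.eq_zero_of_infinite_isRoot
      apply (Set.Ici_infinite (1 : ℝ)).mono
      intro x hx
      have hx1 : (1 : ℝ) ≤ x := hx
      have hxn : (1 : ℝ) ≤ x ^ n := one_le_pow₀ hx1
      set s := Real.sqrt (x ^ n - 1) with hs
      have hs2 : s ^ 2 = x ^ n - 1 := Real.sq_sqrt (by linarith)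
      have hmem : ∀ ε : ℝ, ε = 1 ∨ ε = -1 →
          MvPolynomial.eval ![x, ε * s] P₁ = 0 ∨ MvPolynomial.eval ![x, ε * s] P₂ = 0 := by
        intro ε hε
        have hy2 : (ε * s) ^ 2 = x ^ n - 1 := by
          rcases hε with hε | hε <;> rw [hε] <;> simpa using hs2
        have : (x, ε * s) ∈ realZeroSet P₁ ∪ realZeroSet P₂ := by
          rw [← hU, memS]
          linarith [hy2]
        simpa [realZeroSet] using this
      have hfac : ∀ ε : ℝ, ε = 1 ∨ ε = -1 →
          (a₁.eval x + ε * s * b₁.eval x) * (a₂.eval x + ε * s * b₂.eval x) = 0 := by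
        intro ε hε
        have hy2 : (ε * s) ^ 2 = x ^ n - 1 := by
          rcases hε with hε | hε <;> rw [hε] <;> simpa using hs2
        have := hmem ε hε
        rw [h₁ x (ε * s) hy2, h₂ x (ε * s) hy2] at this
        exact mul_eq_zero.mpr this
      have hplus := hfac 1 (Or.inl rfl)
      have hminus := hfac (-1) (Or.inr rfl)
      show Polynomial.IsRoot _ x
      unfold Polynomial.IsRoot
      have : Polynomial.eval x ((a₁ ^ 2 - ((X : Polynomial ℝ) ^ n - 1) * b₁ ^ 2) *
          (a₂ ^ 2 - ((X : Polynomial ℝ) ^ n - 1) * b₂ ^ 2)) =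
          ((a₁.eval x + 1 * s * b₁.eval x) * (a₂.eval x + 1 * s * b₂.eval x)) *
          ((a₁.eval x + (-1) * s * b₁.eval x) * (a₂.eval x + (-1) * s * b₂.eval x)) := by
        simp only [Polynomial.eval_mul, Polynomial.eval_sub, Polynomial.eval_pow,
          Polynomial.eval_one, Polynomial.eval_X]
        rw [← hs2]
        ring
      rw [this, hplus, zero_mul]
    have sub1 : realZeroSet P₁ ⊆ {p : ℝ × ℝ | p.1 ^ (2 * n) - (1 + p.2 ^ 2) ^ 2 = 0} := by
      rw [hU]; exact Set.subset_union_left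
    have sub2 : realZeroSet P₂ ⊆ {p : ℝ × ℝ | p.1 ^ (2 * n) - (1 + p.2 ^ 2) ^ 2 = 0} := by
      rw [hU]; exact Set.subset_union_right
    rcases mul_eq_zero.mp hprod with hN | hN
    · left
      obtain ⟨ha, hb⟩ := vanish_of_N_zero n hn a₁ b₁ hN
      apply Set.Subset.antisymm _ sub1
      rintro ⟨x, y⟩ hxy
      rw [memS] at hxy
      have hy2 : y ^ 2 = x ^ n - 1 := by linarith
      show MvPolynomial.eval ![x, y] P₁ = 0
      rw [h₁ x y hy2, ha, hb]
      simp
    · right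
      obtain ⟨ha, hb⟩ := vanish_of_N_zero n hn a₂ b₂ hN
      apply Set.Subset.antisymm _ sub2
      rintro ⟨x, y⟩ hxy
      rw [memS] at hxy
      have hy2 : y ^ 2 = x ^ n - 1 := by linarith
      show MvPolynomial.eval ![x, y] P₂ = 0
      rw [h₂ x y hy2, ha, hb]
      simp
end
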